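/- Let α > 0, μ < 0, β, h ∈ ℝ, s₀ = (αh - β)/(√(-μ)(1+α²)), Ω₀ = (h + αβ)/(1+α²). The Jacobian of the desingularized coherent structure system (with c_cp = 0, s = s₀, Ω = Ω₀) at the equilibrium E⁰ = (0, √(-μ), 0) has eigenvalues √(-μ) and -αs₀ - 2√(-μ) ± i s₀, while at E^π = (π, √(-μ), 0) it has eigenvalues -√(-μ) and -αs₀ + 2√(-μ) ± i s₀. -/

import Mathlib

open Real

set_option maxHeartbeats 1000000

private lemma fd0 (x : Fin 3 → ℝ) (j : Fin 3) :
    fderiv ℝ (fun u : Fin 3 → ℝ => Real.sin (u 0) * u 1) x (Pi.single j 1)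
      = ![Real.cos (x 0) * x 1, Real.sin (x 0), 0] j := by
  have hp : ∀ i : Fin 3, HasFDerivAt (𝕜 := ℝ) (fun u : Fin 3 → ℝ => u i)
      (ContinuousLinearMap.proj i) x := fun i => hasFDerivAt_apply i x
  have h1 : HasFDerivAt (fun u : Fin 3 → ℝ => Real.sin (u 0) * u 1) _ x :=
    ((Real.hasDerivAt_sin (x 0)).comp_hasFDerivAt (h₂ := Real.sin) x (hp 0)).mul (hp 1)
  rw [h1.fderiv]
  fin_cases j <;> simp [Pi.single_apply] <;> ring

private lemma fd1 (α h μ s₀ Ω₀ : ℝ) (x : Fin 3 → ℝ) (j : Fin 3) :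
    fderiv ℝ (fun u : Fin 3 → ℝ =>
        h - Ω₀ - α * s₀ * u 1 + s₀ * u 2 - (u 1 ^ 2 - u 2 ^ 2 + μ) * Real.cos (u 0)) x
        (Pi.single j 1)
      = ![(x 1 ^ 2 - x 2 ^ 2 + μ) * Real.sin (x 0),
          -(α * s₀) - 2 * x 1 * Real.cos (x 0),
          s₀ + 2 * x 2 * Real.cos (x 0)] j := by
  have hp : ∀ i : Fin 3, HasFDerivAt (𝕜 := ℝ) (fun u : Fin 3 → ℝ => u i)
      (ContinuousLinearMap.proj i) x := fun i => hasFDerivAt_apply i x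
  have hcos : HasFDerivAt (fun u : Fin 3 → ℝ => Real.cos (u 0)) _ x :=
    (Real.hasDerivAt_cos (x 0)).comp_hasFDerivAt (h₂ := Real.cos) x (hp 0)
  have hq1 : HasFDerivAt (fun u : Fin 3 → ℝ => u 1 ^ 2) _ x :=
    (hasDerivAt_pow 2 (x 1)).comp_hasFDerivAt (h₂ := fun y : ℝ => y ^ 2) x (hp 1)
  have hq2 : HasFDerivAt (fun u : Fin 3 → ℝ => u 2 ^ 2) _ x :=
    (hasDerivAt_pow 2 (x 2)).comp_hasFDerivAt (h₂ := fun y : ℝ => y ^ 2) x (hp 2)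
  have hq : HasFDerivAt (fun u : Fin 3 → ℝ => u 1 ^ 2 - u 2 ^ 2 + μ) _ x :=
    (hq1.sub hq2).add_const μ
  have hprod := hq.mul hcos
  have hlin : HasFDerivAt (fun u : Fin 3 → ℝ => h - Ω₀ - α * s₀ * u 1 + s₀ * u 2) _ x :=
    (((hp 1).const_mul (α * s₀)).const_sub (h - Ω₀)).add ((hp 2).const_mul s₀)
  have h1 : HasFDerivAt (fun u : Fin 3 → ℝ =>
      h - Ω₀ - α * s₀ * u 1 + s₀ * u 2 - (u 1 ^ 2 - u 2 ^ 2 + μ) * Real.cos (u 0)) _ x :=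
    hlin.sub hprod
  rw [h1.fderiv]
  fin_cases j <;> simp [Pi.single_apply] <;> ring

private lemma fd2 (α β s₀ Ω₀ : ℝ) (x : Fin 3 → ℝ) (j : Fin 3) :
    fderiv ℝ (fun u : Fin 3 → ℝ =>
        α * Ω₀ - β - s₀ * u 1 - α * s₀ * u 2 - 2 * u 1 * u 2 * Real.cos (u 0)) x
        (Pi.single j 1)
      = ![2 * x 1 * x 2 * Real.sin (x 0),
          -s₀ - 2 * x 2 * Real.cos (x 0),
          -(α * s₀) - 2 * x 1 * Real.cos (x 0)] j := by
  have hp : ∀ i : Fin 3, HasFDerivAt (𝕜 := ℝ) (fun u : Fin 3 → ℝ => u i)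
      (ContinuousLinearMap.proj i) x := fun i => hasFDerivAt_apply i x
  have hcos : HasFDerivAt (fun u : Fin 3 → ℝ => Real.cos (u 0)) _ x :=
    (Real.hasDerivAt_cos (x 0)).comp_hasFDerivAt (h₂ := Real.cos) x (hp 0)
  have hprod : HasFDerivAt (fun u : Fin 3 → ℝ => 2 * u 1 * u 2 * Real.cos (u 0)) _ x :=
    (((hp 1).const_mul 2).mul (hp 2)).mul hcos
  have hlin : HasFDerivAt
      (fun u : Fin 3 → ℝ => α * Ω₀ - β - s₀ * u 1 - α * s₀ * u 2) _ x :=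
    (((hp 1).const_mul s₀).const_sub (α * Ω₀ - β)).sub ((hp 2).const_mul (α * s₀))
  have h1 : HasFDerivAt (fun u : Fin 3 → ℝ =>
      α * Ω₀ - β - s₀ * u 1 - α * s₀ * u 2 - 2 * u 1 * u 2 * Real.cos (u 0)) _ x :=
    hlin.sub hprod
  rw [h1.fderiv]
  fin_cases j <;> simp [Pi.single_apply] <;> ring

private lemma spec_iff (M : Matrix (Fin 3) (Fin 3) ℂ) (z : ℂ) :
    z ∈ spectrum ℂ M ↔ ((algebraMap ℂ (Matrix (Fin 3) (Fin 3) ℂ)) z - M).det = 0 := by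
  rw [spectrum.mem_iff, Matrix.isUnit_iff_isUnit_det, isUnit_iff_ne_zero, not_not]

private lemma spec_aux (a b s : ℂ) (M : Matrix (Fin 3) (Fin 3) ℂ)
    (hM : M = ![![a, 0, 0], ![0, b, s], ![0, -s, b]]) :
    spectrum ℂ M = {a, b + s * Complex.I, b - s * Complex.I} := by
  ext z
  have key : ((algebraMap ℂ (Matrix (Fin 3) (Fin 3) ℂ)) z - M).det
      = (z - a) * (z - (b + s * Complex.I)) * (z - (b - s * Complex.I)) := by
    rw [Matrix.det_fin_three]
    simp only [Matrix.sub_apply, Matrix.algebraMap_matrix_apply]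
    simp [hM]
    linear_combination (z - a) * s ^ 2 * Complex.I_sq
  rw [spec_iff, key]
  simp only [mul_eq_zero, sub_eq_zero, Set.mem_insert_iff, Set.mem_singleton_iff]
  tauto

theorem jacobian_eigenvalues_at_equilibria (α β h μ s₀ Ω₀ : ℝ)
    (hα : 0 < α) (hμ : μ < 0)
    (hs : s₀ = (α * h - β) / (Real.sqrt (-μ) * (1 + α ^ 2)))
    (hΩ : Ω₀ = (h + α * β) / (1 + α ^ 2))
    (f : (Fin 3 → ℝ) → Fin 3 → ℝ)
    (hf : f = fun u => ![Real.sin (u 0) * u 1,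
      h - Ω₀ - α * s₀ * u 1 + s₀ * u 2 - ((u 1) ^ 2 - (u 2) ^ 2 + μ) * Real.cos (u 0),
      α * Ω₀ - β - s₀ * u 1 - α * s₀ * u 2 - 2 * u 1 * u 2 * Real.cos (u 0)])
    (J : (Fin 3 → ℝ) → Matrix (Fin 3) (Fin 3) ℝ)
    (hJ : J = fun x i j => fderiv ℝ (fun u => f u i) x (Pi.single j 1)) :
    spectrum ℂ ((J ![0, Real.sqrt (-μ), 0]).map (Complex.ofReal))
      = {(Real.sqrt (-μ) : ℂ),
         ((-α * s₀ - 2 * Real.sqrt (-μ) : ℝ) : ℂ) + (s₀ : ℂ) * Complex.I,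
         ((-α * s₀ - 2 * Real.sqrt (-μ) : ℝ) : ℂ) - (s₀ : ℂ) * Complex.I} ∧
    spectrum ℂ ((J ![Real.pi, Real.sqrt (-μ), 0]).map (Complex.ofReal))
      = {(-(Real.sqrt (-μ)) : ℂ),
         ((-α * s₀ + 2 * Real.sqrt (-μ) : ℝ) : ℂ) + (s₀ : ℂ) * Complex.I,
         ((-α * s₀ + 2 * Real.sqrt (-μ) : ℝ) : ℂ) - (s₀ : ℂ) * Complex.I} := by
  set r := Real.sqrt (-μ) with hr
  have hJgen : ∀ x : Fin 3 → ℝ, J x =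
      ![![Real.cos (x 0) * x 1, Real.sin (x 0), 0],
        ![(x 1 ^ 2 - x 2 ^ 2 + μ) * Real.sin (x 0),
          -(α * s₀) - 2 * x 1 * Real.cos (x 0), s₀ + 2 * x 2 * Real.cos (x 0)],
        ![2 * x 1 * x 2 * Real.sin (x 0), -s₀ - 2 * x 2 * Real.cos (x 0),
          -(α * s₀) - 2 * x 1 * Real.cos (x 0)]] := by
    intro x
    subst hf
    subst hJ
    ext i j
    fin_cases i
    · simpa using fd0 x j
    · simpa using fd1 α h μ s₀ Ω₀ x j
    · simpa using fd2 α β s₀ Ω₀ x j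
  have h0 : (J ![0, r, 0]).map (Complex.ofReal)
      = ![![(r : ℂ), 0, 0],
          ![0, ((-α * s₀ - 2 * r : ℝ) : ℂ), (s₀ : ℂ)],
          ![0, -(s₀ : ℂ), ((-α * s₀ - 2 * r : ℝ) : ℂ)]] := by
    ext i j
    rw [Matrix.map_apply, hJgen]
    fin_cases i <;> fin_cases j <;>
      simp [Matrix.map_apply, Matrix.vecHead, Matrix.vecTail] <;> push_cast <;> ring
  have hπ : (J ![Real.pi, r, 0]).map (Complex.ofReal)
      = ![![(-(r : ℂ)), 0, 0],
          ![0, ((-α * s₀ + 2 * r : ℝ) : ℂ), (s₀ : ℂ)],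
          ![0, -(s₀ : ℂ), ((-α * s₀ + 2 * r : ℝ) : ℂ)]] := by
    ext i j
    rw [Matrix.map_apply, hJgen]
    fin_cases i <;> fin_cases j <;>
      simp [Matrix.map_apply, Matrix.vecHead, Matrix.vecTail] <;> push_cast <;> ring
  constructor
  · rw [h0]
    exact spec_aux _ _ _ _ rfl
  · rw [hπ]
    exact spec_aux _ _ _ _ rfl
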